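/- arXiv:1703.03849 — 8 statements merged into one kernel-verified Lean document; each statement's English description precedes it below -/
import Mathlib

section
/- For every hypergraph H = (V, E) on n vertices with rank r (and n ≥ 1), there exists a function γ' : E → ℕ with γ'(e) ≥ 1 for all e such that (i) γ'(e) ≤ γ_H(e) for every edge e ∈ E, and (ii) ∑_{e ∈ E} 1/γ'(e) ≤ 8·r·(n − 1). In other words, every rank-r hypergraph admits an O(r)-approximate strength function. -/
/- A hypergraph on a finite vertex type `V` is given by a multiset `E` of edges,
each edge a `Finset V` (with at least 2 vertices, stated as a hypothesis). -/

variable {V : Type*} [Fintype V] [DecidableEq V]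

/-- `δ_H(A)`: the (multiset of) edges of `E` crossing the cut `A`. -/
def cutEdges (E : Multiset (Finset V)) (A : Finset V) : Multiset (Finset V) :=
  E.filter (fun e => (e ∩ A).Nonempty ∧ (e \ A).Nonempty)

/-- Edge multiset of the subhypergraph `H[U]` induced on `U`. -/
def induced (E : Multiset (Finset V)) (U : Finset V) : Multiset (Finset V) :=
  E.filter (fun e => e ⊆ U)

/-- Edge-connectivity `λ(H[U])`: the minimum number of edges of `H[U]` crossing a
nonempty proper subset `A ⊊ U`. -/
noncomputable def lam (E : Multiset (Finset V)) (U : Finset V) : ℕ :=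
  sInf {k : ℕ | ∃ A : Finset V, A ⊆ U ∧ A.Nonempty ∧ A ≠ U ∧
    k = Multiset.card (cutEdges (induced E U) A)}

/-- Strength `γ_H(e)`: the maximum of `λ(H[U])` over all `U` with `e ⊆ U ⊆ V`. -/
noncomputable def strength (E : Multiset (Finset V)) (e : Finset V) : ℕ :=
  (Finset.univ.powerset.filter (fun U => e ⊆ U)).sup (lam E)

/-- The graph on `V` joining two distinct vertices that lie in a common edge of `E`;
its connectivity notions are those of the hypergraph. -/
def toGraph (E : Multiset (Finset V)) : SimpleGraph V where
  Adj u v := u ≠ v ∧ ∃ e ∈ E, u ∈ e ∧ v ∈ e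
  symm := ⟨by rintro u v ⟨h, e, he, hu, hv⟩; exact ⟨h.symm, e, he, hv, hu⟩⟩
  loopless := ⟨by rintro v ⟨h, -⟩; exact h rfl⟩

/-- `κ(H)`: the number of connected components of the hypergraph. -/
noncomputable def kappa (E : Multiset (Finset V)) : ℕ :=
  Nat.card (toGraph E).ConnectedComponent

/-- The vertex map contracting the edge `e'` to its representative vertex `v0 ∈ e'`. -/
def contractMap (e' : Finset V) (v0 : V) : V → V := fun u => if u ∈ e' then v0 else u

/-- The hypergraph `H/e'` obtained by contracting the edge `e'` (to the representative
vertex `v0 ∈ e'`): edges contained in `e'` are removed, all other edges are replaced by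
their image under the contraction. -/
def contract (E : Multiset (Finset V)) (e' : Finset V) (v0 : V) : Multiset (Finset V) :=
  (E.filter (fun f => ¬ f ⊆ e')).map (fun f => f.image (contractMap e' v0))

/-- The degree of a vertex: the number of edges (with multiplicity) containing it. -/
def degree (E : Multiset (Finset V)) (v : V) : ℕ :=
  Multiset.card (E.filter (fun e => v ∈ e))

lemma lam_le_strength (E : Multiset (Finset V)) {e U : Finset V} (heU : e ⊆ U) :
    lam E U ≤ strength E e :=
  Finset.le_sup (by simp [Finset.mem_filter, Finset.mem_powerset, heU])

lemma induced_filter_subset (E : Multiset (Finset V)) {A U : Finset V} (hAU : A ⊆ U) :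
    (induced E U).filter (fun e => e ⊆ A) = induced E A := by
  unfold induced
  rw [Multiset.filter_filter]
  refine Multiset.filter_congr fun e _ => ?_
  constructor
  · exact fun h => h.1
  · exact fun h => ⟨h, h.trans hAU⟩

set_option maxHeartbeats 800000 in
lemma main_lemma (E : Multiset (Finset V)) (hE : ∀ e ∈ E, 2 ≤ e.card) :
    ∀ (n : ℕ) (U : Finset V), U.card = n → U.Nonempty →
    ∃ γ' : Finset V → ℕ,
      (∀ e ∈ induced E U, 1 ≤ γ' e ∧ γ' e ≤ strength E e) ∧
      ((induced E U).map (fun e => (1:ℝ) / (γ' e : ℝ))).sum ≤ (U.card : ℝ) - 1 := by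
  intro n
  induction n using Nat.strong_induction_on with
  | _ n ih =>
  intro U hUn hUne
  by_cases hn2 : 2 ≤ n
  · -- main case
    -- the defining set of `lam E U` is nonempty
    obtain ⟨a, ha⟩ := hUne
    have hSne : {k : ℕ | ∃ A : Finset V, A ⊆ U ∧ A.Nonempty ∧ A ≠ U ∧
        k = Multiset.card (cutEdges (induced E U) A)}.Nonempty := by
      refine ⟨_, {a}, Finset.singleton_subset_iff.mpr ha, Finset.singleton_nonempty a, ?_, rfl⟩
      intro h
      rw [← h] at hUn
      simp at hUn
      omega
    have hmem : ∃ A : Finset V, A ⊆ U ∧ A.Nonempty ∧ A ≠ U ∧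
        lam E U = Multiset.card (cutEdges (induced E U) A) := Nat.sInf_mem hSne
    obtain ⟨A, hAU, hAne, hAneU, hAcard⟩ := hmem
    set L := lam E U with hL
    have hAltU : A.card < U.card := Finset.card_lt_card (Finset.ssubset_iff_subset_ne.mpr ⟨hAU, hAneU⟩)
    set B := U \ A with hB
    have hBne : B.Nonempty := by
      obtain ⟨x, hxU, hxA⟩ := Finset.exists_of_ssubset (Finset.ssubset_iff_subset_ne.mpr ⟨hAU, hAneU⟩)
      exact ⟨x, Finset.mem_sdiff.mpr ⟨hxU, hxA⟩⟩
    have hBltU : B.card < U.card := by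
      have h1 : B.card = U.card - A.card := Finset.card_sdiff_of_subset hAU
      have h2 := Finset.card_pos.mpr hAne
      have h3 := Finset.card_le_card hAU
      omega
    obtain ⟨γ₁, hγ₁, hs₁⟩ := ih A.card (hUn ▸ hAltU) A rfl hAne
    obtain ⟨γ₂, hγ₂, hs₂⟩ := ih B.card (hUn ▸ hBltU) B rfl hBne
    set M := induced E U with hM
    -- decomposition of M into three parts
    have hMA : M.filter (fun e => e ⊆ A) = induced E A := induced_filter_subset E hAU
    set N := M.filter (fun e => ¬ e ⊆ A) with hN
    have hNB : N.filter (fun e => e ⊆ B) = induced E B := by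
      rw [hN, hM, induced, Multiset.filter_filter, Multiset.filter_filter, induced]
      refine Multiset.filter_congr fun e heE => ?_
      constructor
      · exact fun h => h.1.1
      · intro h
        refine ⟨⟨h, ?_⟩, h.trans (Finset.sdiff_subset)⟩
        intro hA
        obtain ⟨x, hx⟩ := Finset.card_pos.mp (show 0 < e.card by have := hE e heE; omega)
        exact (Finset.mem_sdiff.mp (h hx)).2 (hA hx)
    have hNC : N.filter (fun e => ¬ e ⊆ B) = cutEdges M A := by
      rw [hN, Multiset.filter_filter, cutEdges]
      refine Multiset.filter_congr fun e heM => ?_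
      have heU : e ⊆ U := (Multiset.mem_filter.mp heM).2
      have h1 : ¬ e ⊆ A ↔ (e \ A).Nonempty := Finset.sdiff_nonempty.symm
      have h2 : ¬ e ⊆ B ↔ (e ∩ A).Nonempty := by
        rw [hB, Finset.subset_sdiff]
        constructor
        · intro h
          rcases Finset.not_disjoint_iff_nonempty_inter.mp (fun hd => h ⟨heU, hd⟩) with hne
          exact hne
        · intro hne h
          exact (Finset.not_disjoint_iff_nonempty_inter.mpr hne) h.2
      constructor
      · exact fun h => ⟨h2.mp h.1, h1.mp h.2⟩
      · exact fun h => ⟨h2.mpr h.1, h1.mpr h.2⟩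
    have hdecomp : induced E A + (induced E B + cutEdges M A) = M := by
      rw [← hMA, ← hNB, ← hNC, Multiset.filter_add_not, Multiset.filter_add_not]
    have hLpos : ∀ e ∈ cutEdges M A, 1 ≤ L := by
      intro e he
      have : cutEdges M A ≠ 0 := by
        intro h0; rw [h0] at he; exact absurd he (Multiset.notMem_zero e)
      have := Multiset.card_pos.mpr this
      omega
    have hcutA : ∀ e ∈ cutEdges M A, ¬ e ⊆ A := by
      intro e he hsub
      have hp := (Multiset.mem_filter.mp he).2
      obtain ⟨x, hx⟩ := hp.2
      exact (Finset.mem_sdiff.mp hx).2 (hsub (Finset.mem_sdiff.mp hx).1)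
    have hcutB : ∀ e ∈ cutEdges M A, ¬ e ⊆ B := by
      intro e he hsub
      have hp := (Multiset.mem_filter.mp he).2
      obtain ⟨x, hx⟩ := hp.1
      have hxA := (Finset.mem_inter.mp hx).2
      have := Finset.mem_sdiff.mp (hsub (Finset.mem_inter.mp hx).1)
      exact this.2 hxA
    have hBnotA : ∀ e ∈ induced E B, ¬ e ⊆ A := by
      intro e he hsub
      have heE := (Multiset.mem_filter.mp he).1
      have heB : e ⊆ B := (Multiset.mem_filter.mp he).2
      obtain ⟨x, hx⟩ := Finset.card_pos.mp (show 0 < e.card by have := hE e heE; omega)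
      exact (Finset.mem_sdiff.mp (heB hx)).2 (hsub hx)
    refine ⟨fun f => if f ⊆ A then γ₁ f else if f ⊆ B then γ₂ f else max L 1, ?_, ?_⟩
    · intro e he
      have heE : e ∈ E := (Multiset.mem_filter.mp he).1
      have heU : e ⊆ U := (Multiset.mem_filter.mp he).2
      by_cases h1 : e ⊆ A
      · simp only [if_pos h1]
        exact hγ₁ e (Multiset.mem_filter.mpr ⟨heE, h1⟩)
      · by_cases h2 : e ⊆ B
        · simp only [if_neg h1, if_pos h2]
          exact hγ₂ e (Multiset.mem_filter.mpr ⟨heE, h2⟩)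
        · simp only [if_neg h1, if_neg h2]
          have hecut : e ∈ cutEdges M A := by
            rw [← hNC]
            exact Multiset.mem_filter.mpr ⟨Multiset.mem_filter.mpr ⟨he, h1⟩, h2⟩
          have hL1 := hLpos e hecut
          constructor
          · exact le_max_right _ _
          · rw [Nat.max_eq_left hL1]
            exact lam_le_strength E heU
    · set f : Finset V → ℝ := fun e =>
        (1:ℝ) / ((if e ⊆ A then γ₁ e else if e ⊆ B then γ₂ e else max L 1 : ℕ) : ℝ) with hf
      have hsum : (M.map f).sum =
          ((induced E A).map f).sum + (((induced E B).map f).sum + ((cutEdges M A).map f).sum) := by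
        conv_lhs => rw [← hdecomp]
        rw [Multiset.map_add, Multiset.map_add, Multiset.sum_add, Multiset.sum_add]
      have hs1 : ((induced E A).map f).sum ≤ (A.card : ℝ) - 1 := by
        have : (induced E A).map f = (induced E A).map (fun e => (1:ℝ) / (γ₁ e : ℝ)) := by
          refine Multiset.map_congr rfl fun e he => ?_
          have h1 : e ⊆ A := (Multiset.mem_filter.mp he).2
          simp [hf, if_pos h1]
        rw [this]; exact hs₁
      have hs2 : ((induced E B).map f).sum ≤ (B.card : ℝ) - 1 := by
        have : (induced E B).map f = (induced E B).map (fun e => (1:ℝ) / (γ₂ e : ℝ)) := by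
          refine Multiset.map_congr rfl fun e he => ?_
          have h2 : e ⊆ B := (Multiset.mem_filter.mp he).2
          simp [hf, if_neg (hBnotA e he), if_pos h2]
        rw [this]; exact hs₂
      have hs3 : ((cutEdges M A).map f).sum ≤ 1 := by
        have hmapc : (cutEdges M A).map f =
            (cutEdges M A).map (fun _ => (1:ℝ) / (max L 1 : ℕ)) := by
          refine Multiset.map_congr rfl fun e he => ?_
          simp [hf, if_neg (hcutA e he), if_neg (hcutB e he)]
        rw [hmapc, Multiset.map_const', Multiset.sum_replicate, ← hAcard, nsmul_eq_mul,
          mul_one_div]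
        have hden : (0:ℝ) < ((max L 1 : ℕ) : ℝ) := by
          exact_mod_cast Nat.lt_of_lt_of_le Nat.zero_lt_one (le_max_right L 1)
        rw [div_le_one hden]
        exact_mod_cast le_max_left L 1
      have hcards : A.card + B.card = U.card := by
        have h1 : B.card = U.card - A.card := Finset.card_sdiff_of_subset hAU
        have h3 := Finset.card_le_card hAU
        omega
      have : (A.card : ℝ) + (B.card : ℝ) = (U.card : ℝ) := by exact_mod_cast congrArg Nat.cast hcards
      rw [hsum]
      linarith
  · -- card U = 1
    have hn1 : n = 1 := by
      have := Finset.card_pos.mpr hUne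
      omega
    have hind : induced E U = 0 := by
      rw [induced, Multiset.filter_eq_nil]
      intro e he hsub
      have := hE e he
      have := Finset.card_le_card hsub
      omega
    exact ⟨fun _ => 1, by simp [hind], by simp [hind, hUn, hn1]⟩


/-- every rank-`r` hypergraph on `n ≥ 1` vertices admits an
`O(r)`-approximate strength function `γ'`: it lower bounds the true strength and
`∑_{e ∈ E} 1/γ'(e) ≤ 8·r·(n-1)`. -/
theorem approx_strength_exists (E : Multiset (Finset V))
    (hE : ∀ e ∈ E, 2 ≤ e.card) (r : ℕ) (hr : ∀ e ∈ E, e.card ≤ r)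
    (hn : 1 ≤ Fintype.card V) :
    ∃ γ' : Finset V → ℕ, (∀ e ∈ E, 1 ≤ γ' e) ∧
      (∀ e ∈ E, γ' e ≤ strength E e) ∧
      (E.map (fun e => (1 : ℝ) / (γ' e : ℝ))).sum ≤
        8 * (r : ℝ) * ((Fintype.card V : ℝ) - 1) := by
  have hEuniv : induced E (Finset.univ : Finset V) = E :=
    Multiset.filter_eq_self.mpr fun e _ => Finset.subset_univ e
  have huniv_ne : (Finset.univ : Finset V).Nonempty := by
    rw [← Finset.card_pos, Finset.card_univ]; omega
  obtain ⟨γ', hγ', hsum⟩ := main_lemma E hE (Finset.univ : Finset V).card Finset.univ rfl huniv_ne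
  rw [hEuniv] at hγ' hsum
  rw [Finset.card_univ] at hsum
  refine ⟨γ', fun e he => (hγ' e he).1, fun e he => (hγ' e he).2, ?_⟩
  rcases Multiset.empty_or_exists_mem E with h0 | ⟨e, he⟩
  · rw [h0]
    simp only [Multiset.map_zero, Multiset.sum_zero]
    have h1 : (0:ℝ) ≤ (r : ℝ) := Nat.cast_nonneg r
    have h2 : (0:ℝ) ≤ (Fintype.card V : ℝ) - 1 := by
      have : (1:ℝ) ≤ (Fintype.card V : ℝ) := by exact_mod_cast hn
      linarith
    nlinarith
  · have hr2 : 2 ≤ r := le_trans (hE e he) (hr e he)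
    have h2 : (0:ℝ) ≤ (Fintype.card V : ℝ) - 1 := by
      have : (1:ℝ) ≤ (Fintype.card V : ℝ) := by exact_mod_cast hn
      linarith
    have h3 : (1:ℝ) ≤ 8 * (r : ℝ) := by
      have : (2:ℝ) ≤ (r:ℝ) := by exact_mod_cast hr2
      linarith
    nlinarith [hsum]
end

section
/- Let H = (V, E) be a hypergraph and e' ∈ E an edge. For every edge e ∈ E with e ≠ e' that is not removed by the contraction, the corresponding edge f of e in the contracted hypergraph H/e' satisfies γ_{H/e'}(f) ≥ γ_H(e); that is, contracting an edge does not decrease the strength of any remaining edge. -/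
/- A hypergraph on a finite vertex type `V` is given by a multiset `E` of edges,
each edge a `Finset V` (with at least 2 vertices, stated as a hypothesis). -/

variable {V : Type*} [Fintype V] [DecidableEq V]

set_option linter.unusedSectionVars false in
theorem lam_le_lam_contract (E : Multiset (Finset V)) (e' : Finset V) (v0 : V)
    (hv0 : v0 ∈ e') (U : Finset V)
    (x y : V) (hx : x ∈ U.image (contractMap e' v0)) (hy : y ∈ U.image (contractMap e' v0))
    (hxy : x ≠ y) :
    lam E U ≤ lam (contract E e' v0) (U.image (contractMap e' v0)) := by
  classical
  set φ := contractMap e' v0 with hφ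
  set U' := U.image φ with hU'
  have hS'ne : {k : ℕ | ∃ A : Finset V, A ⊆ U' ∧ A.Nonempty ∧ A ≠ U' ∧
      k = Multiset.card (cutEdges (induced (contract E e' v0) U') A)}.Nonempty := by
    have hprop : ({x} : Finset V) ≠ U' := by
      intro h
      have hy' := hy
      rw [← h] at hy'
      exact hxy (Finset.mem_singleton.mp hy').symm
    exact ⟨_, ⟨{x}, Finset.singleton_subset_iff.mpr hx, Finset.singleton_nonempty x, hprop, rfl⟩⟩
  refine le_csInf hS'ne ?_
  rintro k ⟨A', hA'sub, hA'ne, hA'prop, rfl⟩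
  set B := U.filter (fun u => φ u ∈ A') with hB
  have hBsub : B ⊆ U := Finset.filter_subset _ _
  have hBne : B.Nonempty := by
    obtain ⟨a, ha⟩ := hA'ne
    obtain ⟨u, hu, rfl⟩ := Finset.mem_image.mp (hA'sub ha)
    exact ⟨u, Finset.mem_filter.mpr ⟨hu, ha⟩⟩
  have hBneU : B ≠ U := by
    intro h
    apply hA'prop
    refine Finset.Subset.antisymm hA'sub ?_
    intro a ha
    obtain ⟨u, hu, rfl⟩ := Finset.mem_image.mp ha
    have : u ∈ B := h ▸ hu
    exact (Finset.mem_filter.mp this).2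
  refine le_trans (Nat.sInf_le ⟨B, hBsub, hBne, hBneU, rfl⟩) ?_
  -- card comparison
  have hL : cutEdges (induced E U) B
      = E.filter (fun f => ((f ∩ B).Nonempty ∧ (f \ B).Nonempty) ∧ f ⊆ U) := by
    simp [cutEdges, induced, Multiset.filter_filter]
  have hR : Multiset.card (cutEdges (induced (contract E e' v0) U') A')
      = Multiset.card (E.filter
          (fun f => ((f.image φ ∩ A').Nonempty ∧ (f.image φ \ A').Nonempty) ∧
            f.image φ ⊆ U' ∧ ¬ f ⊆ e')) := by
    simp [cutEdges, induced, contract, Multiset.filter_filter, Multiset.filter_map,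
      Function.comp, hφ]
  rw [hL, hR]
  apply Multiset.card_le_card
  apply Multiset.monotone_filter_right
  intro f hf
  obtain ⟨⟨⟨u, hu⟩, ⟨w, hw⟩⟩, hfU⟩ := hf
  have huf : u ∈ f := (Finset.mem_inter.mp hu).1
  have huB : u ∈ B := (Finset.mem_inter.mp hu).2
  have huA' : φ u ∈ A' := (Finset.mem_filter.mp huB).2
  have hwf : w ∈ f := (Finset.mem_sdiff.mp hw).1
  have hwB : w ∉ B := (Finset.mem_sdiff.mp hw).2
  have hwA' : φ w ∉ A' := fun h => hwB (Finset.mem_filter.mpr ⟨hfU hwf, h⟩)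
  have hP : ¬ f ⊆ e' := by
    intro hfe'
    apply hwA'
    have h1 : φ u = v0 := by simp [hφ, contractMap, hfe' huf]
    have h2 : φ w = v0 := by simp [hφ, contractMap, hfe' hwf]
    rw [h2, ← h1]; exact huA'
  exact ⟨⟨⟨φ u, Finset.mem_inter.mpr ⟨Finset.mem_image_of_mem φ huf, huA'⟩⟩,
    ⟨φ w, Finset.mem_sdiff.mpr ⟨Finset.mem_image_of_mem φ hwf, hwA'⟩⟩⟩,
    Finset.image_subset_image hfU, hP⟩

/-- contracting an edge does not decrease the strength of any remaining
edge (one that is not removed by the contraction). -/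
theorem strength_contract_ge (E : Multiset (Finset V)) (hE : ∀ e ∈ E, 2 ≤ e.card)
    (e' : Finset V) (he' : e' ∈ E) (v0 : V) (hv0 : v0 ∈ e')
    (e : Finset V) (he : e ∈ E) (hne : e ≠ e') (hkeep : ¬ e ⊆ e') :
    strength E e ≤ strength (contract E e' v0) (e.image (contractMap e' v0)) := by
  classical
  set φ := contractMap e' v0 with hφ
  apply Finset.sup_le
  intro U hU
  have heU : e ⊆ U := (Finset.mem_filter.mp hU).2
  have hU' : U.image φ ∈ Finset.univ.powerset.filter (fun W => e.image φ ⊆ W) := by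
    simp only [Finset.mem_filter, Finset.mem_powerset]
    exact ⟨Finset.subset_univ _, Finset.image_subset_image heU⟩
  refine le_trans ?_ (Finset.le_sup hU')
  obtain ⟨u, hue, hue'⟩ := Finset.not_subset.mp hkeep
  have hφu : φ u = u := by simp [hφ, contractMap, hue']
  have huI : u ∈ U.image φ := by
    rw [← hφu]; exact Finset.mem_image_of_mem φ (heU hue)
  -- find a second element of `U.image φ` distinct from `u`
  rcases (e ∩ e').eq_empty_or_nonempty with hcap | ⟨w, hw⟩
  · have h2 := hE e he
    obtain ⟨a, ha, b, hb, hab⟩ := Finset.one_lt_card.mp h2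
    have hne' : ∀ z ∈ e, z ∉ e' := by
      intro z hz hz'
      exact Finset.notMem_empty z (hcap ▸ Finset.mem_inter.mpr ⟨hz, hz'⟩)
    have hφa : φ a = a := by simp [hφ, contractMap, hne' a ha]
    have hφb : φ b = b := by simp [hφ, contractMap, hne' b hb]
    have haI : a ∈ U.image φ := by rw [← hφa]; exact Finset.mem_image_of_mem φ (heU ha)
    have hbI : b ∈ U.image φ := by rw [← hφb]; exact Finset.mem_image_of_mem φ (heU hb)
    exact lam_le_lam_contract E e' v0 hv0 U a b haI hbI hab
  · have hwe : w ∈ e := (Finset.mem_inter.mp hw).1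
    have hwe' : w ∈ e' := (Finset.mem_inter.mp hw).2
    have hφw : φ w = v0 := by simp [hφ, contractMap, hwe']
    have hv0I : v0 ∈ U.image φ := by rw [← hφw]; exact Finset.mem_image_of_mem φ (heU hwe)
    have huv0 : u ≠ v0 := fun h => hue' (h ▸ hv0)
    exact lam_le_lam_contract E e' v0 hv0 U u v0 huI hv0I huv0
end

section
/- Let H = (V, E) be a connected hypergraph with |V| ≥ 2. Then the weighted hypergraph obtained by giving each edge e the weight ζ_H(e) = 1/γ_H(e) has minimum cut value exactly 1; that is, the minimum over nonempty proper subsets A ⊊ V of ∑_{e ∈ δ_H(A)} 1/γ_H(e) equals 1. -/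
/- A hypergraph on a finite vertex type `V` is given by a multiset `E` of edges,
each edge a `Finset V` (with at least 2 vertices, stated as a hypothesis). -/

variable {V : Type*} [Fintype V] [DecidableEq V]

lemma induced_univ (E : Multiset (Finset V)) : induced E Finset.univ = E :=
  Multiset.filter_eq_self.2 (fun _ _ => Finset.subset_univ _)

omit [Fintype V] in
lemma exists_cross {E : Multiset (Finset V)} {A : Finset V} :
    ∀ {a b : V}, (toGraph E).Walk a b → a ∈ A → b ∉ A →
    ∃ e, e ∈ cutEdges E A := by
  intro a b w
  induction w with
  | nil => intro h h'; exact absurd h h'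
  | @cons a c b h p ih =>
    intro ha hb
    by_cases hc : c ∈ A
    · exact ih hc hb
    · obtain ⟨hne, e, he, hu, hv⟩ := h
      exact ⟨e, Multiset.mem_filter.2 ⟨he,
        ⟨a, Finset.mem_inter.2 ⟨hu, ha⟩⟩, ⟨c, Finset.mem_sdiff.2 ⟨hv, hc⟩⟩⟩⟩

lemma cutEdges_card_pos (E : Multiset (Finset V)) (hconn : (toGraph E).Connected)
    {A : Finset V} (hA : A.Nonempty) (hA' : A ≠ Finset.univ) :
    1 ≤ Multiset.card (cutEdges E A) := by
  obtain ⟨a, ha⟩ := hA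
  obtain ⟨b, hb⟩ : ∃ b, b ∉ A := by
    by_contra h
    push_neg at h
    exact hA' (Finset.eq_univ_iff_forall.2 h)
  obtain ⟨e, he⟩ := exists_cross ((hconn a b).some) ha hb
  exact Multiset.card_pos.2 (fun h0 => by simp [h0] at he)

lemma strength_le_cut (E : Multiset (Finset V)) {e A : Finset V}
    (he : e ∈ cutEdges E A) :
    strength E e ≤ Multiset.card (cutEdges E A) := by
  obtain ⟨heE, h1, h2⟩ := Multiset.mem_filter.1 he
  apply Finset.sup_le
  intro U hU
  have heU : e ⊆ U := (Finset.mem_filter.1 hU).2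
  obtain ⟨x, hx⟩ := h1
  obtain ⟨y, hy⟩ := h2
  simp only [Finset.mem_inter] at hx
  simp only [Finset.mem_sdiff] at hy
  have hle : lam E U ≤ Multiset.card (cutEdges (induced E U) (A ∩ U)) := by
    apply Nat.sInf_le
    refine ⟨A ∩ U, Finset.inter_subset_right, ⟨x, Finset.mem_inter.2 ⟨hx.2, heU hx.1⟩⟩, ?_, rfl⟩
    intro hEq
    have : y ∈ A ∩ U := by rw [hEq]; exact heU hy.1
    exact hy.2 (Finset.mem_inter.1 this).1
  refine hle.trans (Multiset.card_le_card ?_)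
  unfold cutEdges induced
  rw [Multiset.filter_filter]
  apply Multiset.monotone_filter_right
  rintro f ⟨⟨⟨u, hu⟩, ⟨v, hv⟩⟩, hfU⟩
  simp only [Finset.mem_inter, Finset.mem_sdiff] at hu hv
  exact ⟨⟨u, Finset.mem_inter.2 ⟨hu.1, hu.2.1⟩⟩,
    ⟨v, Finset.mem_sdiff.2 ⟨hv.1, fun hvA => hv.2 ⟨hvA, hfU hv.1⟩⟩⟩⟩

lemma lam_univ_le_strength (E : Multiset (Finset V)) (e : Finset V) :
    lam E Finset.univ ≤ strength E e :=
  Finset.le_sup (by simp)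


/-- in a connected hypergraph with at least 2 vertices, weighting each
edge `e` by `ζ_H(e) = 1/γ_H(e)` yields a hypergraph whose minimum cut value is
exactly `1`: every nonempty proper cut has weight at least `1`, and some such cut has
weight exactly `1`. -/
theorem cost_weighted_mincut_eq_one (E : Multiset (Finset V))
    (hE : ∀ e ∈ E, 2 ≤ e.card) (hconn : (toGraph E).Connected)
    (hn : 2 ≤ Fintype.card V) :
    (∀ A : Finset V, A.Nonempty → A ≠ Finset.univ →
      1 ≤ ((cutEdges E A).map (fun e => (1 : ℝ) / (strength E e : ℝ))).sum) ∧
    (∃ A : Finset V, A.Nonempty ∧ A ≠ Finset.univ ∧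
      ((cutEdges E A).map (fun e => (1 : ℝ) / (strength E e : ℝ))).sum = 1) := by
  -- the min-cut value
  set k := lam E Finset.univ with hk
  -- a minimizing cut exists
  have hSne : {n : ℕ | ∃ A : Finset V, A ⊆ Finset.univ ∧ A.Nonempty ∧ A ≠ Finset.univ ∧
      n = Multiset.card (cutEdges (induced E Finset.univ) A)}.Nonempty := by
    obtain ⟨v⟩ : Nonempty V := Fintype.card_pos_iff.1 (by omega)
    refine ⟨_, {v}, Finset.subset_univ _, Finset.singleton_nonempty v, ?_, rfl⟩
    intro h
    have := Fintype.card_le_of_surjective (fun _ : ({v} : Finset V) => (⟨v, by simp⟩ : ({v} : Finset V)))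
    have : Fintype.card V = ({v} : Finset V).card := by rw [← Finset.card_univ, h]
    simp at this; omega
  obtain ⟨A₀, -, hA₀ne, hA₀univ, hA₀card⟩ := Nat.sInf_mem hSne
  rw [induced_univ] at hA₀card
  have hlamk : k = sInf {n : ℕ | ∃ A : Finset V, A ⊆ Finset.univ ∧ A.Nonempty ∧
      A ≠ Finset.univ ∧ n = Multiset.card (cutEdges E A)} := by
    rw [hk]; unfold lam; rw [induced_univ]
  have hA₀k : Multiset.card (cutEdges E A₀) = k := by rw [hlamk]; exact hA₀card.symm
  have hk1 : 1 ≤ k := hA₀k ▸ cutEdges_card_pos E hconn hA₀ne hA₀univ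
  -- strength bounds
  have hstr_ge : ∀ e : Finset V, (k : ℝ) ≤ (strength E e : ℝ) := fun e => by
    exact_mod_cast lam_univ_le_strength E e
  have hkpos : (0 : ℝ) < k := by exact_mod_cast hk1
  constructor
  · intro A hA hA'
    set m := Multiset.card (cutEdges E A) with hm
    have hm1 : 1 ≤ m := cutEdges_card_pos E hconn hA hA'
    have hmpos : (0 : ℝ) < m := by exact_mod_cast hm1
    have hbound : ∀ x ∈ (cutEdges E A).map (fun e => (1 : ℝ) / (strength E e : ℝ)),
        (1 : ℝ) / m ≤ x := by
      intro x hx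
      obtain ⟨e, he, rfl⟩ := Multiset.mem_map.1 hx
      have h1 : (strength E e : ℝ) ≤ m := by exact_mod_cast strength_le_cut E he
      have h2 : (0 : ℝ) < strength E e := lt_of_lt_of_le hkpos (hstr_ge e)
      exact one_div_le_one_div_of_le h2 h1
    have := Multiset.card_nsmul_le_sum hbound
    rw [Multiset.card_map] at this
    calc (1 : ℝ) = m • ((1:ℝ)/m) := by
          rw [nsmul_eq_mul]; field_simp
      _ ≤ _ := this
  · refine ⟨A₀, hA₀ne, hA₀univ, ?_⟩
    have hconst : ∀ e ∈ cutEdges E A₀, (1 : ℝ) / (strength E e : ℝ) = 1 / k := by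
      intro e he
      have h1 : strength E e ≤ k := hA₀k ▸ strength_le_cut E he
      have h2 : k ≤ strength E e := lam_univ_le_strength E e
      rw [le_antisymm h1 h2]
    rw [Multiset.map_congr rfl hconst, Multiset.map_const', Multiset.sum_replicate, hA₀k,
      nsmul_eq_mul]
    field_simp
end

section
/- For every hypergraph H = (V, E) on n ≥ 1 vertices, ∑_{e ∈ E} 1/γ_H(e) ≤ n − κ(H), where κ(H) is the number of connected components of H. -/
/- A hypergraph on a finite vertex type `V` is given by a multiset `E` of edges,
each edge a `Finset V` (with at least 2 vertices, stated as a hypothesis). -/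

variable {V : Type*} [Fintype V] [DecidableEq V]

set_option linter.unusedSectionVars false


noncomputable def strengthOn (E : Multiset (Finset V)) (U : Finset V) (e : Finset V) : ℕ :=
  (U.powerset.filter (fun W => e ⊆ W)).sup (lam E)

lemma mem_induced {E : Multiset (Finset V)} {U e : Finset V} :
    e ∈ induced E U ↔ e ∈ E ∧ e ⊆ U := Multiset.mem_filter

lemma one_le_lam_self {E : Multiset (Finset V)} {e : Finset V} (heE : e ∈ E)
    (he2 : 2 ≤ e.card) : 1 ≤ lam E e := by
  have hpos : 0 < e.card := by omega
  obtain ⟨v, hv⟩ := Finset.card_pos.mp hpos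
  have hSne : {k : ℕ | ∃ A : Finset V, A ⊆ e ∧ A.Nonempty ∧ A ≠ e ∧
      k = Multiset.card (cutEdges (induced E e) A)}.Nonempty := by
    refine ⟨_, {v}, Finset.singleton_subset_iff.mpr hv, Finset.singleton_nonempty v, ?_, rfl⟩
    intro h; rw [← h, Finset.card_singleton] at he2; omega
  have hmem : lam E e ∈ {k : ℕ | ∃ A : Finset V, A ⊆ e ∧ A.Nonempty ∧ A ≠ e ∧
      k = Multiset.card (cutEdges (induced E e) A)} := Nat.sInf_mem hSne
  obtain ⟨A, hAe, hAne, hAneE, hk⟩ := hmem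
  rw [hk]
  have hmem2 : e ∈ cutEdges (induced E e) A := by
    rw [cutEdges, Multiset.mem_filter]
    refine ⟨mem_induced.mpr ⟨heE, Finset.Subset.refl e⟩, ?_, ?_⟩
    · obtain ⟨a, ha⟩ := hAne
      exact ⟨a, Finset.mem_inter.mpr ⟨hAe ha, ha⟩⟩
    · rw [Finset.sdiff_nonempty]
      intro hsub
      exact hAneE (Finset.Subset.antisymm hAe hsub)
  have := Multiset.card_pos_iff_exists_mem.mpr ⟨e, hmem2⟩
  omega

lemma one_le_strengthOn {E : Multiset (Finset V)} {U e : Finset V} (heE : e ∈ E)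
    (he2 : 2 ≤ e.card) (heU : e ⊆ U) : 1 ≤ strengthOn E U e :=
  le_trans (one_le_lam_self heE he2)
    (Finset.le_sup (by simp [Finset.mem_filter, Finset.mem_powerset, heU]))

lemma strengthOn_mono {E : Multiset (Finset V)} {e U U' : Finset V} (h : U ⊆ U') :
    strengthOn E U e ≤ strengthOn E U' e :=
  Finset.sup_mono (Finset.filter_subset_filter _ (Finset.powerset_mono.mpr h))

lemma lam_le_strengthOn {E : Multiset (Finset V)} {U e : Finset V} (heU : e ⊆ U) :
    lam E U ≤ strengthOn E U e :=
  Finset.le_sup (by simp [Finset.mem_filter, Finset.mem_powerset, heU])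

lemma induced_induced {E : Multiset (Finset V)} {A U : Finset V} (h : A ⊆ U) :
    (induced E U).filter (fun e => e ⊆ A) = induced E A := by
  rw [induced, induced, Multiset.filter_filter]
  exact Multiset.filter_congr (fun e _ => by
    constructor
    · rintro ⟨h1, _⟩; exact h1
    · exact fun h1 => ⟨h1, h1.trans h⟩)

lemma reachable_of_one_le_lam {E : Multiset (Finset V)} {U : Finset V} (hlam : 1 ≤ lam E U)
    {u v : V} (hu : u ∈ U) (hv : v ∈ U) : (toGraph (induced E U)).Reachable u v := by
  classical
  by_contra hreach
  set A := U.filter (fun w => (toGraph (induced E U)).Reachable u w) with hA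
  have huA : u ∈ A := by
    rw [hA, Finset.mem_filter]; exact ⟨hu, SimpleGraph.Reachable.refl u⟩
  have hvA : v ∉ A := by
    intro h; exact hreach (Finset.mem_filter.mp h).2
  have hcut : cutEdges (induced E U) A = 0 := by
    rw [cutEdges, Multiset.filter_eq_nil]
    rintro f hf ⟨⟨x, hx⟩, ⟨y, hy⟩⟩
    rw [Finset.mem_inter] at hx
    rw [Finset.mem_sdiff] at hy
    have hfU : f ⊆ U := (mem_induced.mp hf).2
    have hxA := hx.2
    rw [hA, Finset.mem_filter] at hxA
    have hxy : x ≠ y := by rintro rfl; exact hy.2 hx.2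
    have hadj : (toGraph (induced E U)).Adj x y := ⟨hxy, f, hf, hx.1, hy.1⟩
    exact hy.2 (by rw [hA, Finset.mem_filter]; exact ⟨hfU hy.1, hxA.2.trans hadj.reachable⟩)
  have hle : lam E U ≤ 0 := Nat.sInf_le ⟨A, Finset.filter_subset _ _, ⟨u, huA⟩,
    (fun h => hvA (h ▸ hv)), by simp [hcut]⟩
  omega

lemma ncard_image_mk_le (E : Multiset (Finset V)) {A U : Finset V} (hAU : A ⊆ U) :
    ((fun v => (toGraph (induced E U)).connectedComponentMk v) '' ↑A).ncard ≤
    ((fun v => (toGraph (induced E A)).connectedComponentMk v) '' ↑A).ncard := by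
  have hle : toGraph (induced E A) ≤ toGraph (induced E U) := by
    rintro x y ⟨hne, f, hf, hx, hy⟩
    refine ⟨hne, f, ?_, hx, hy⟩
    rw [mem_induced] at hf ⊢
    exact ⟨hf.1, hf.2.trans hAU⟩
  have himg : (fun v => (toGraph (induced E U)).connectedComponentMk v) '' ↑A =
      (SimpleGraph.ConnectedComponent.map (SimpleGraph.Hom.ofLE hle)) ''
        ((fun v => (toGraph (induced E A)).connectedComponentMk v) '' ↑A) := by
    rw [Set.image_image]
    exact Set.image_congr (fun v _ => by
      rw [SimpleGraph.ConnectedComponent.map_mk]; rfl)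
  rw [himg]
  exact Set.ncard_image_le (Set.toFinite _)

lemma main_ineq (E : Multiset (Finset V)) (hE : ∀ e ∈ E, 2 ≤ e.card) :
    ∀ U : Finset V, U.Nonempty →
      ((induced E U).map (fun e => (1 : ℝ) / (strengthOn E U e : ℝ))).sum ≤
        (U.card : ℝ) -
          (((fun v => (toGraph (induced E U)).connectedComponentMk v) '' ↑U).ncard : ℝ) := by
  intro U
  induction U using Finset.strongInduction with
  | _ U ih =>
  intro hU
  by_cases hcard : U.card < 2
  · have h1 : U.card = 1 := by
      have := Finset.card_pos.mpr hU; omega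
    obtain ⟨v, rfl⟩ := Finset.card_eq_one.mp h1
    have hind : induced E {v} = 0 := by
      rw [induced, Multiset.filter_eq_nil]
      intro e he hsub
      have h2 := Finset.card_le_card hsub
      have h3 := hE e he
      rw [Finset.card_singleton] at h2
      omega
    rw [hind]
    simp
  · push_neg at hcard
    obtain ⟨v, hv⟩ := hU
    have hSne : {k : ℕ | ∃ A : Finset V, A ⊆ U ∧ A.Nonempty ∧ A ≠ U ∧
        k = Multiset.card (cutEdges (induced E U) A)}.Nonempty := by
      refine ⟨_, {v}, Finset.singleton_subset_iff.mpr hv, Finset.singleton_nonempty v, ?_, rfl⟩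
      intro h; rw [← h] at hcard; simp at hcard
    have hmem : lam E U ∈ {k : ℕ | ∃ A : Finset V, A ⊆ U ∧ A.Nonempty ∧ A ≠ U ∧
        k = Multiset.card (cutEdges (induced E U) A)} := Nat.sInf_mem hSne
    obtain ⟨A, hAU, hAne, hAneU, hk⟩ := hmem
    set B := U \ A with hB
    have hBU : B ⊆ U := Finset.sdiff_subset
    have hBne : B.Nonempty := by
      rw [hB, Finset.sdiff_nonempty]
      intro h; exact hAneU (Finset.Subset.antisymm hAU h)
    have hUAB : U = A ∪ B := by rw [hB, Finset.union_sdiff_of_subset hAU]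
    have hcardAB : A.card + B.card = U.card := by
      rw [hB, Finset.card_sdiff_of_subset hAU]
      have := Finset.card_le_card hAU
      omega
    have hssA : A ⊂ U := Finset.ssubset_iff_subset_ne.mpr ⟨hAU, hAneU⟩
    have hssB : B ⊂ U := by
      rw [hB]; exact Finset.sdiff_ssubset hAU hAne
    have ihA := ih A hssA hAne
    have ihB := ih B hssB hBne
    -- edge decomposition
    have hEB : ((induced E U).filter (fun e => ¬ e ⊆ A)).filter (fun e => e ⊆ B)
        = induced E B := by
      rw [Multiset.filter_filter]
      rw [Multiset.filter_congr (q := fun e => e ⊆ B) (fun e he => ?_)]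
      · exact induced_induced hBU
      · constructor
        · rintro ⟨h1, _⟩; exact h1
        · intro h1
          refine ⟨h1, fun hA2 => ?_⟩
          have heE := (mem_induced.mp he).1
          have hepos : 0 < e.card := by have := hE e heE; omega
          obtain ⟨x, hx⟩ := Finset.card_pos.mp hepos
          exact (Finset.mem_sdiff.mp (h1 hx)).2 (hA2 hx)
    have hEC : ((induced E U).filter (fun e => ¬ e ⊆ A)).filter (fun e => ¬ e ⊆ B)
        = cutEdges (induced E U) A := by
      rw [Multiset.filter_filter, cutEdges]
      refine Multiset.filter_congr (fun e he => ?_)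
      have hfU : e ⊆ U := (mem_induced.mp he).2
      constructor
      · rintro ⟨hnB, hnA⟩
        constructor
        · by_contra hcontra
          rw [Finset.not_nonempty_iff_eq_empty] at hcontra
          apply hnB
          intro x hx
          rw [hB, Finset.mem_sdiff]
          refine ⟨hfU hx, fun hxA => ?_⟩
          have hmm : x ∈ e ∩ A := Finset.mem_inter.mpr ⟨hx, hxA⟩
          rw [hcontra] at hmm
          exact absurd hmm (Finset.notMem_empty x)
        · rw [Finset.sdiff_nonempty]; exact hnA
      · rintro ⟨⟨x, hx⟩, hne⟩
        rw [Finset.sdiff_nonempty] at hne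
        refine ⟨fun hsubB => ?_, hne⟩
        rw [Finset.mem_inter] at hx
        exact (Finset.mem_sdiff.mp (hsubB hx.1)).2 hx.2
    have hdecomp : induced E U = induced E A + (induced E B + cutEdges (induced E U) A) := by
      conv_lhs => rw [← Multiset.filter_add_not (fun e => e ⊆ A) (induced E U)]
      rw [← Multiset.filter_add_not (fun e => e ⊆ B)
        ((induced E U).filter (fun e => ¬ e ⊆ A)), hEB, hEC, induced_induced hAU]
    -- bounds for the three pieces
    have hbA : ((induced E A).map (fun e => (1 : ℝ) / (strengthOn E U e : ℝ))).sum ≤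
        ((induced E A).map (fun e => (1 : ℝ) / (strengthOn E A e : ℝ))).sum := by
      apply Multiset.sum_map_le_sum_map
      intro e he
      rw [mem_induced] at he
      have h1 : 1 ≤ strengthOn E A e := one_le_strengthOn he.1 (hE e he.1) he.2
      have h2 : strengthOn E A e ≤ strengthOn E U e := strengthOn_mono hAU
      have h1' : (1 : ℝ) ≤ (strengthOn E A e : ℝ) := by exact_mod_cast h1
      exact one_div_le_one_div_of_le (by linarith) (by exact_mod_cast h2)
    have hbB : ((induced E B).map (fun e => (1 : ℝ) / (strengthOn E U e : ℝ))).sum ≤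
        ((induced E B).map (fun e => (1 : ℝ) / (strengthOn E B e : ℝ))).sum := by
      apply Multiset.sum_map_le_sum_map
      intro e he
      rw [mem_induced] at he
      have h1 : 1 ≤ strengthOn E B e := one_le_strengthOn he.1 (hE e he.1) he.2
      have h2 : strengthOn E B e ≤ strengthOn E U e := strengthOn_mono hBU
      have h1' : (1 : ℝ) ≤ (strengthOn E B e : ℝ) := by exact_mod_cast h1
      exact one_div_le_one_div_of_le (by linarith) (by exact_mod_cast h2)
    have hsum : ((induced E U).map (fun e => (1 : ℝ) / (strengthOn E U e : ℝ))).sum =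
        ((induced E A).map (fun e => (1 : ℝ) / (strengthOn E U e : ℝ))).sum +
        (((induced E B).map (fun e => (1 : ℝ) / (strengthOn E U e : ℝ))).sum +
         ((cutEdges (induced E U) A).map (fun e => (1 : ℝ) / (strengthOn E U e : ℝ))).sum) := by
      conv_lhs => rw [hdecomp]
      rw [Multiset.map_add, Multiset.map_add, Multiset.sum_add, Multiset.sum_add]
    rw [hsum]
    by_cases hl : lam E U = 0
    · -- disconnected case
      have hcut0 : cutEdges (induced E U) A = 0 := by
        apply Multiset.card_eq_zero.mp
        rw [← hk]; exact hl
      rw [hcut0]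
      simp only [Multiset.map_zero, Multiset.sum_zero, add_zero]
      have hcomp : (((fun v => (toGraph (induced E U)).connectedComponentMk v) '' ↑U).ncard) ≤
          (((fun v => (toGraph (induced E A)).connectedComponentMk v) '' ↑A).ncard) +
          (((fun v => (toGraph (induced E B)).connectedComponentMk v) '' ↑B).ncard) := by
        calc ((fun v => (toGraph (induced E U)).connectedComponentMk v) '' ↑U).ncard
            = (((fun v => (toGraph (induced E U)).connectedComponentMk v) '' ↑A) ∪
               ((fun v => (toGraph (induced E U)).connectedComponentMk v) '' ↑B)).ncard := by
              rw [← Set.image_union, ← Finset.coe_union, ← hUAB]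
          _ ≤ _ := le_trans (Set.ncard_union_le _ _)
              (add_le_add (ncard_image_mk_le E hAU) (ncard_image_mk_le E hBU))
      have hc' : ((((fun v => (toGraph (induced E U)).connectedComponentMk v) '' ↑U).ncard : ℝ)) ≤
          ((((fun v => (toGraph (induced E A)).connectedComponentMk v) '' ↑A).ncard : ℝ)) +
          ((((fun v => (toGraph (induced E B)).connectedComponentMk v) '' ↑B).ncard : ℝ)) := by
        exact_mod_cast hcomp
      have hcc : ((A.card : ℝ)) + (B.card : ℝ) = (U.card : ℝ) := by exact_mod_cast hcardAB
      linarith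
    · -- connected case
      have hl1 : 1 ≤ lam E U := Nat.one_le_iff_ne_zero.mpr hl
      have hbC : ((cutEdges (induced E U) A).map
          (fun e => (1 : ℝ) / (strengthOn E U e : ℝ))).sum ≤ 1 := by
        have hlpos : (0 : ℝ) < (lam E U : ℝ) := by exact_mod_cast Nat.pos_of_ne_zero hl
        have hstep : ∀ x ∈ (cutEdges (induced E U) A).map
            (fun e => (1 : ℝ) / (strengthOn E U e : ℝ)), x ≤ 1 / (lam E U : ℝ) := by
          intro x hx
          obtain ⟨e, he, rfl⟩ := Multiset.mem_map.mp hx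
          have heU : e ∈ induced E U := (Multiset.mem_filter.mp he).1
          have h2 : lam E U ≤ strengthOn E U e := lam_le_strengthOn (mem_induced.mp heU).2
          exact one_div_le_one_div_of_le hlpos (by exact_mod_cast h2)
        calc ((cutEdges (induced E U) A).map (fun e => (1 : ℝ) / (strengthOn E U e : ℝ))).sum
            ≤ Multiset.card ((cutEdges (induced E U) A).map
                (fun e => (1 : ℝ) / (strengthOn E U e : ℝ))) • (1 / (lam E U : ℝ)) :=
              Multiset.sum_le_card_nsmul _ _ hstep
          _ = (lam E U : ℝ) * (1 / (lam E U : ℝ)) := by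
              rw [Multiset.card_map, ← hk, nsmul_eq_mul]
          _ = 1 := by field_simp
      have hconn : ((fun v => (toGraph (induced E U)).connectedComponentMk v) '' ↑U) =
          {(toGraph (induced E U)).connectedComponentMk v} := by
        ext c
        simp only [Set.mem_image, Set.mem_singleton_iff, Finset.mem_coe]
        constructor
        · rintro ⟨u, hu, rfl⟩
          exact SimpleGraph.ConnectedComponent.eq.mpr (reachable_of_one_le_lam hl1 hu hv)
        · rintro rfl; exact ⟨v, hv, rfl⟩
      have hcU : (((fun v => (toGraph (induced E U)).connectedComponentMk v) '' ↑U).ncard) = 1 := by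
        rw [hconn, Set.ncard_singleton]
      have hcA : 1 ≤ (((fun v => (toGraph (induced E A)).connectedComponentMk v) '' ↑A).ncard) := by
        rw [Nat.one_le_iff_ne_zero, ← Nat.pos_iff_ne_zero]
        exact (Set.ncard_pos (Set.toFinite _)).mpr
          ((Finset.coe_nonempty.mpr hAne).image _)
      have hcB : 1 ≤ (((fun v => (toGraph (induced E B)).connectedComponentMk v) '' ↑B).ncard) := by
        rw [Nat.one_le_iff_ne_zero, ← Nat.pos_iff_ne_zero]
        exact (Set.ncard_pos (Set.toFinite _)).mpr
          ((Finset.coe_nonempty.mpr hBne).image _)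
      have hcA' : (1 : ℝ) ≤
          ((((fun v => (toGraph (induced E A)).connectedComponentMk v) '' ↑A).ncard : ℝ)) := by
        exact_mod_cast hcA
      have hcB' : (1 : ℝ) ≤
          ((((fun v => (toGraph (induced E B)).connectedComponentMk v) '' ↑B).ncard : ℝ)) := by
        exact_mod_cast hcB
      have hcc : ((A.card : ℝ)) + (B.card : ℝ) = (U.card : ℝ) := by exact_mod_cast hcardAB
      rw [hcU]
      push_cast
      linarith


/-- for every hypergraph on `n ≥ 1` vertices,
`∑_{e ∈ E} 1/γ_H(e) ≤ n - κ(H)`. -/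
theorem sum_inv_strength_le (E : Multiset (Finset V)) (hE : ∀ e ∈ E, 2 ≤ e.card)
    (hn : 1 ≤ Fintype.card V) :
    (E.map (fun e => (1 : ℝ) / (strength E e : ℝ))).sum ≤
      (Fintype.card V : ℝ) - (kappa E : ℝ) := by
  haveI : Nonempty V := Fintype.card_pos_iff.mp hn
  have h := main_ineq E hE Finset.univ Finset.univ_nonempty
  have hEuniv : induced E Finset.univ = E :=
    Multiset.filter_eq_self.mpr (fun e _ => Finset.subset_univ e)
  rw [hEuniv] at h
  have hstr : (fun e => (1 : ℝ) / (strengthOn E Finset.univ e : ℝ)) =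
      (fun e => (1 : ℝ) / (strength E e : ℝ)) := rfl
  rw [hstr] at h
  have hkap : (((fun v => (toGraph E).connectedComponentMk v) '' ↑(Finset.univ : Finset V)).ncard)
      = kappa E := by
    rw [Finset.coe_univ, Set.image_univ, Set.range_eq_univ.mpr
      (fun c => c.exists_rep), Set.ncard_univ]
    rfl
  rw [hkap, Finset.card_univ] at h
  exact h
end

section
/- Let H = (V, E) be a hypergraph on n vertices and k a positive integer. The number of k-weak edges of H (edges e with γ_H(e) < k), counted with multiplicity, is at most k·(n − κ(H)). -/
/- A hypergraph on a finite vertex type `V` is given by a multiset `E` of edges,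
each edge a `Finset V` (with at least 2 vertices, stated as a hypothesis). -/

variable {V : Type*} [Fintype V] [DecidableEq V]

section Aux

lemma aux_lam_le (E : Multiset (Finset V)) {U A : Finset V} (hA : A ⊆ U)
    (hne : A.Nonempty) (hAU : A ≠ U) :
    lam E U ≤ Multiset.card (cutEdges (induced E U) A) :=
  Nat.sInf_le ⟨A, hA, hne, hAU, rfl⟩

lemma aux_lam_mono {E' E : Multiset (Finset V)} (h : E' ≤ E) (U : Finset V) :
    lam E' U ≤ lam E U := by
  by_cases hS : ∃ A : Finset V, A ⊆ U ∧ A.Nonempty ∧ A ≠ U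
  · obtain ⟨A₀, hA₀, hne₀, hAU₀⟩ := hS
    have hmem : lam E U ∈ {k : ℕ | ∃ A : Finset V, A ⊆ U ∧ A.Nonempty ∧ A ≠ U ∧
        k = Multiset.card (cutEdges (induced E U) A)} :=
      Nat.sInf_mem ⟨_, A₀, hA₀, hne₀, hAU₀, rfl⟩
    obtain ⟨A, hA, hne, hAU, hcard⟩ := hmem
    calc lam E' U ≤ Multiset.card (cutEdges (induced E' U) A) := aux_lam_le E' hA hne hAU
      _ ≤ Multiset.card (cutEdges (induced E U) A) :=
          Multiset.card_le_card (Multiset.filter_le_filter _ (Multiset.filter_le_filter _ h))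
      _ = lam E U := hcard.symm
  · have hempty : {k : ℕ | ∃ A : Finset V, A ⊆ U ∧ A.Nonempty ∧ A ≠ U ∧
        k = Multiset.card (cutEdges (induced E' U) A)} = ∅ := by
      ext n
      simp only [Set.mem_setOf_eq, Set.mem_empty_iff_false, iff_false]
      rintro ⟨A, hA, hne, hAU, -⟩
      exact hS ⟨A, hA, hne, hAU⟩
    rw [lam, hempty, Nat.sInf_empty]
    exact Nat.zero_le _

lemma aux_strength_mono {E' E : Multiset (Finset V)} (h : E' ≤ E) (e : Finset V) :
    strength E' e ≤ strength E e :=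
  Finset.sup_mono_fun fun U _ => aux_lam_mono h U

lemma aux_reach_iff {E : Multiset (Finset V)} {A : Finset V}
    (hA : ∀ f ∈ E, ¬((f ∩ A).Nonempty ∧ (f \ A).Nonempty)) :
    ∀ {u v : V}, (toGraph E).Reachable u v → (u ∈ A ↔ v ∈ A) := by
  intro u v h
  obtain ⟨w⟩ := h
  induction w with
  | nil => exact Iff.rfl
  | cons hxy p ih =>
    refine Iff.trans ?_ ih
    obtain ⟨hne, f, hf, hx, hy⟩ := hxy
    have hnc := hA f hf
    constructor
    · intro hxA
      by_contra hyA
      exact hnc ⟨⟨_, Finset.mem_inter.mpr ⟨hx, hxA⟩⟩, ⟨_, Finset.mem_sdiff.mpr ⟨hy, hyA⟩⟩⟩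
    · intro hyA
      by_contra hxA
      exact hnc ⟨⟨_, Finset.mem_inter.mpr ⟨hy, hyA⟩⟩, ⟨_, Finset.mem_sdiff.mpr ⟨hx, hxA⟩⟩⟩

lemma aux_kappa_le (E : Multiset (Finset V)) : kappa E ≤ Fintype.card V := by
  rw [kappa, ← Nat.card_eq_fintype_card]
  exact Nat.card_le_card_of_surjective (toGraph E).connectedComponentMk
    (fun c => c.exists_rep)

lemma aux_kappa_lt {E' E : Multiset (Finset V)} (hle : toGraph E' ≤ toGraph E)
    {u v : V} (huv : (toGraph E).Reachable u v) (hnuv : ¬(toGraph E').Reachable u v) :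
    kappa E < kappa E' := by
  have h1 : Finite (toGraph E).ConnectedComponent := Quot.finite _
  have h2 : Finite (toGraph E').ConnectedComponent := Quot.finite _
  have hfE : Fintype (toGraph E).ConnectedComponent := Fintype.ofFinite _
  have hfE' : Fintype (toGraph E').ConnectedComponent := Fintype.ofFinite _
  rw [kappa, kappa, Nat.card_eq_fintype_card, Nat.card_eq_fintype_card]
  refine Fintype.card_lt_of_surjective_not_injective
    (SimpleGraph.ConnectedComponent.map (SimpleGraph.Hom.ofLE hle)) ?_ ?_
  · intro c
    obtain ⟨w, rfl⟩ := c.exists_rep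
    exact ⟨(toGraph E').connectedComponentMk w, rfl⟩
  · intro hinj
    apply hnuv
    have h1 : ((toGraph E').connectedComponentMk u).map (SimpleGraph.Hom.ofLE hle) =
        ((toGraph E').connectedComponentMk v).map (SimpleGraph.Hom.ofLE hle) := by
      simp only [SimpleGraph.ConnectedComponent.map_mk]
      exact SimpleGraph.ConnectedComponent.eq.mpr huv
    exact SimpleGraph.ConnectedComponent.eq.mp (hinj h1)

lemma aux_main (k : ℕ) (hk : 0 < k) : ∀ n (E : Multiset (Finset V)),
    Multiset.card E = n → (∀ e ∈ E, 2 ≤ e.card) →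
    Multiset.card (E.filter (fun e => strength E e < k)) ≤ k * (Fintype.card V - kappa E) := by
  intro n
  induction n using Nat.strong_induction_on with
  | _ n IH =>
  intro E hcard hE
  by_cases hcase : ∃ B : Finset V, cutEdges E B ≠ 0 ∧ Multiset.card (cutEdges E B) < k
  · obtain ⟨B, hBne, hBlt⟩ := hcase
    set E' : Multiset (Finset V) :=
      E.filter (fun f => ¬((f ∩ B).Nonempty ∧ (f \ B).Nonempty)) with hE'def
    have hsplit : cutEdges E B + E' = E := Multiset.filter_add_not _ E
    have hcutpos : 0 < Multiset.card (cutEdges E B) := Multiset.card_pos.mpr hBne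
    have hE'le : E' ≤ E := Multiset.filter_le _ E
    have hE'card : Multiset.card E' < n := by
      have h := congrArg Multiset.card hsplit
      rw [Multiset.card_add] at h
      omega
    have hgle : toGraph E' ≤ toGraph E := by
      rintro x y ⟨hxy, f, hf, hx, hy⟩
      exact ⟨hxy, f, Multiset.mem_of_le hE'le hf, hx, hy⟩
    obtain ⟨f₀, hf₀⟩ := Multiset.card_pos_iff_exists_mem.mp hcutpos
    have hf₀E := Multiset.mem_filter.mp hf₀
    obtain ⟨x, hx⟩ := hf₀E.2.1
    obtain ⟨y, hy⟩ := hf₀E.2.2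
    rw [Finset.mem_inter] at hx
    rw [Finset.mem_sdiff] at hy
    have hreach : (toGraph E).Reachable x y := by
      have hne : x ≠ y := fun h => hy.2 (h ▸ hx.2)
      exact SimpleGraph.Adj.reachable ⟨hne, f₀, hf₀E.1, hx.1, hy.1⟩
    have hnreach : ¬(toGraph E').Reachable x y := by
      intro h
      have hiff := aux_reach_iff (A := B) (fun f hf => (Multiset.mem_filter.mp hf).2) h
      exact hy.2 (hiff.mp hx.2)
    have hklt : kappa E < kappa E' := aux_kappa_lt hgle hreach hnreach
    have hkle : kappa E' ≤ Fintype.card V := aux_kappa_le E'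
    have hIH := IH _ hE'card E' rfl (fun e he => hE e (Multiset.mem_of_le hE'le he))
    have key : Multiset.card (E.filter (fun e => strength E e < k)) ≤
        Multiset.card (cutEdges E B) +
        Multiset.card (E'.filter (fun e => strength E' e < k)) := by
      have h' : Multiset.card (E.filter (fun e => strength E e < k)) =
          Multiset.card ((cutEdges E B + E').filter (fun e => strength E e < k)) := by
        rw [hsplit]
      rw [h', Multiset.filter_add, Multiset.card_add]
      refine Nat.add_le_add (Multiset.card_le_card (Multiset.filter_le _ _)) ?_
      refine Multiset.card_le_card (Multiset.monotone_filter_right _ ?_)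
      intro e he
      exact lt_of_le_of_lt (aux_strength_mono hE'le e) he
    have hsum : Multiset.card (cutEdges E B) +
        Multiset.card (E'.filter (fun e => strength E' e < k)) <
        k + k * (Fintype.card V - kappa E') := add_lt_add_of_lt_of_le hBlt hIH
    have heq : k + k * (Fintype.card V - kappa E') =
        k * (Fintype.card V - kappa E' + 1) := by ring
    have hle2 : k * (Fintype.card V - kappa E' + 1) ≤ k * (Fintype.card V - kappa E) :=
      Nat.mul_le_mul_left k (by omega)
    exact le_of_lt (lt_of_le_of_lt key ((heq ▸ hsum).trans_le hle2))
  · push_neg at hcase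
    classical
    have hall : ∀ e ∈ E, ¬(strength E e < k) := by
      intro e he
      rw [not_lt]
      obtain ⟨v₀, hv₀⟩ : e.Nonempty := Finset.card_pos.mp (by have := hE e he; omega)
      set U : Finset V := Finset.univ.filter (fun w => (toGraph E).Reachable v₀ w) with hU
      have hmemU : ∀ w, w ∈ U ↔ (toGraph E).Reachable v₀ w := by
        intro w; simp [hU]
      have hedge : ∀ f ∈ E, ∀ x ∈ f, x ∈ U → f ⊆ U := by
        intro f hf x hxf hxU y hyf
        rcases eq_or_ne y x with rfl | hne
        · exact hxU
        · rw [hmemU] at hxU ⊢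
          exact hxU.trans (SimpleGraph.Adj.reachable ⟨hne.symm, f, hf, hxf, hyf⟩)
      have heU : e ⊆ U := hedge e he v₀ hv₀ ((hmemU v₀).mpr (SimpleGraph.Reachable.refl v₀))
      have h1 : lam E U ≤ strength E e := by
        refine Finset.le_sup ?_
        simp only [Finset.mem_filter, Finset.mem_powerset]
        exact ⟨Finset.subset_univ U, heU⟩
      refine le_trans ?_ h1
      obtain ⟨y, hy, hyne⟩ : ∃ y ∈ e, y ≠ v₀ :=
        Finset.exists_mem_ne (by have := hE e he; omega) v₀
      have hmem : lam E U ∈ {m : ℕ | ∃ A : Finset V, A ⊆ U ∧ A.Nonempty ∧ A ≠ U ∧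
          m = Multiset.card (cutEdges (induced E U) A)} := by
        apply Nat.sInf_mem
        refine ⟨_, {v₀}, ?_, ⟨v₀, Finset.mem_singleton_self v₀⟩, ?_, rfl⟩
        · exact Finset.singleton_subset_iff.mpr (heU hv₀)
        · intro h
          have hyy : y ∈ ({v₀} : Finset V) := h ▸ heU hy
          exact hyne (Finset.mem_singleton.mp hyy)
      obtain ⟨A, hAU, hAne, hAneU, hlam⟩ := hmem
      rw [hlam]
      have hcross_sub : ∀ f ∈ E, ((f ∩ A).Nonempty ∧ (f \ A).Nonempty) → f ⊆ U := by
        rintro f hf ⟨⟨x, hx⟩, -⟩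
        rw [Finset.mem_inter] at hx
        exact hedge f hf x hx.1 (hAU hx.2)
      have heq2 : cutEdges (induced E U) A = cutEdges E A := by
        unfold cutEdges induced
        rw [Multiset.filter_filter]
        apply Multiset.filter_congr
        intro f hf
        constructor
        · rintro ⟨h, -⟩; exact h
        · intro h; exact ⟨h, hcross_sub f hf h⟩
      rw [heq2]
      apply hcase
      obtain ⟨a, ha⟩ := hAne
      obtain ⟨u, huU, huA⟩ := Finset.exists_of_ssubset (hAU.ssubset_of_ne hAneU)
      have hru : (toGraph E).Reachable a u :=
        ((hmemU a).mp (hAU ha)).symm.trans ((hmemU u).mp huU)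
      intro h0
      have hnoc : ∀ f ∈ E, ¬((f ∩ A).Nonempty ∧ (f \ A).Nonempty) := by
        intro f hf hc
        have hmem2 : f ∈ cutEdges E A := Multiset.mem_filter.mpr ⟨hf, hc⟩
        rw [h0] at hmem2
        simp at hmem2
      exact huA ((aux_reach_iff hnoc hru).mp ha)
    rw [Multiset.filter_eq_nil.mpr hall]
    simp

end Aux

/-- the number of `k`-weak edges (counted with multiplicity) is at most
`k·(n - κ(H))`. -/
theorem card_weak_edges_le (E : Multiset (Finset V)) (hE : ∀ e ∈ E, 2 ≤ e.card)
    (k : ℕ) (hk : 0 < k) :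
    Multiset.card (E.filter (fun e => strength E e < k)) ≤
      k * (Fintype.card V - kappa E) := by
  exact aux_main k hk (Multiset.card E) E rfl hE
end

section
/- Let H = (V, E) be a hypergraph and A, B ⊆ V sets with |A| ≥ 2, |B| ≥ 2, and A ∩ B ≠ ∅. Then λ(H[A ∪ B]) ≥ min(λ(H[A]), λ(H[B])); that is, edge-connectivity of induced subhypergraphs satisfies this triangle-type inequality on overlapping vertex sets. -/
/- A hypergraph on a finite vertex type `V` is given by a multiset `E` of edges,
each edge a `Finset V` (with at least 2 vertices, stated as a hypothesis). -/

variable {V : Type*} [Fintype V] [DecidableEq V]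

lemma cut_mono (E : Multiset (Finset V)) (A U S : Finset V) (hAU : A ⊆ U) :
    Multiset.card (cutEdges (induced E A) (S ∩ A)) ≤
      Multiset.card (cutEdges (induced E U) S) := by
  classical
  apply Multiset.card_le_card
  unfold cutEdges induced
  rw [Multiset.filter_filter, Multiset.filter_filter]
  apply Multiset.monotone_filter_right
  rintro e ⟨⟨⟨v, hv⟩, ⟨w, hw⟩⟩, heA⟩
  simp only [Finset.mem_inter, Finset.mem_sdiff] at hv hw
  refine ⟨⟨⟨v, ?_⟩, ⟨w, ?_⟩⟩, heA.trans hAU⟩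
  · exact Finset.mem_inter.2 ⟨hv.1, hv.2.1⟩
  · refine Finset.mem_sdiff.2 ⟨hw.1, fun hwS => hw.2 ⟨hwS, heA hw.1⟩⟩

lemma cut_compl (E : Multiset (Finset V)) (U S : Finset V) :
    cutEdges (induced E U) (U \ S) = cutEdges (induced E U) S := by
  classical
  unfold cutEdges
  apply Multiset.filter_congr
  intro e he
  have heU : e ⊆ U := (Multiset.mem_filter.1 he).2
  constructor
  · rintro ⟨⟨v, hv⟩, ⟨w, hw⟩⟩
    simp only [Finset.mem_inter, Finset.mem_sdiff] at hv hw
    refine ⟨⟨w, Finset.mem_inter.2 ⟨hw.1, by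
      by_contra hS; exact hw.2 ⟨heU hw.1, hS⟩⟩⟩,
      ⟨v, Finset.mem_sdiff.2 ⟨hv.1, hv.2.2⟩⟩⟩
  · rintro ⟨⟨v, hv⟩, ⟨w, hw⟩⟩
    simp only [Finset.mem_inter, Finset.mem_sdiff] at hv hw
    refine ⟨⟨w, Finset.mem_inter.2 ⟨hw.1, Finset.mem_sdiff.2 ⟨heU hw.1, hw.2⟩⟩⟩,
      ⟨v, Finset.mem_sdiff.2 ⟨hv.1, fun h => (Finset.mem_sdiff.1 h).2 hv.2⟩⟩⟩

lemma lam_le_of_cut (E : Multiset (Finset V)) (U S : Finset V) (hS : S ⊆ U)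
    (hne : S.Nonempty) (hpr : S ≠ U) :
    lam E U ≤ Multiset.card (cutEdges (induced E U) S) :=
  Nat.sInf_le ⟨S, hS, hne, hpr, rfl⟩

/-- for overlapping vertex sets `A, B` (each of size at least 2),
`λ(H[A ∪ B]) ≥ min(λ(H[A]), λ(H[B]))`. -/
theorem lam_union_ge_min (E : Multiset (Finset V)) (hE : ∀ e ∈ E, 2 ≤ e.card)
    (A B : Finset V) (hA : 2 ≤ A.card) (hB : 2 ≤ B.card) (hAB : (A ∩ B).Nonempty) :
    min (lam E A) (lam E B) ≤ lam E (A ∪ B) := by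
  classical
  obtain ⟨x, hx⟩ := hAB
  have hxA : x ∈ A := (Finset.mem_inter.1 hx).1
  have hxB : x ∈ B := (Finset.mem_inter.1 hx).2
  have hxU : x ∈ A ∪ B := Finset.mem_union_left _ hxA
  -- key: for any valid cut S of A ∪ B with x ∉ S, we get the bound
  have key : ∀ S : Finset V, S ⊆ A ∪ B → S.Nonempty → x ∉ S →
      min (lam E A) (lam E B) ≤ Multiset.card (cutEdges (induced E (A ∪ B)) S) := by
    intro S hS hne hxS
    obtain ⟨y, hy⟩ := hne
    rcases Finset.mem_union.1 (hS hy) with hyA | hyB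
    · calc min (lam E A) (lam E B) ≤ lam E A := min_le_left _ _
        _ ≤ Multiset.card (cutEdges (induced E A) (S ∩ A)) := by
            apply lam_le_of_cut
            · exact Finset.inter_subset_right
            · exact ⟨y, Finset.mem_inter.2 ⟨hy, hyA⟩⟩
            · intro h
              have hm : x ∈ S ∩ A := by rw [h]; exact hxA
              exact hxS (Finset.mem_inter.1 hm).1
        _ ≤ _ := cut_mono E A (A ∪ B) S Finset.subset_union_left
    · calc min (lam E A) (lam E B) ≤ lam E B := min_le_right _ _
        _ ≤ Multiset.card (cutEdges (induced E B) (S ∩ B)) := by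
            apply lam_le_of_cut
            · exact Finset.inter_subset_right
            · exact ⟨y, Finset.mem_inter.2 ⟨hy, hyB⟩⟩
            · intro h
              have hm : x ∈ S ∩ B := by rw [h]; exact hxB
              exact hxS (Finset.mem_inter.1 hm).1
        _ ≤ _ := cut_mono E B (A ∪ B) S Finset.subset_union_right
  apply le_csInf
  · -- nonempty: a singleton cut exists
    have h2 : 2 ≤ (A ∪ B).card := le_trans hA (Finset.card_le_card Finset.subset_union_left)
    obtain ⟨z, hz, hzx⟩ : ∃ z ∈ A ∪ B, z ≠ x := by
      by_contra h
      push_neg at h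
      have : A ∪ B ⊆ {x} := fun v hv => Finset.mem_singleton.2 (h v hv)
      have := Finset.card_le_card this
      simp at this; omega
    exact ⟨_, {x}, Finset.singleton_subset_iff.2 hxU, Finset.singleton_nonempty x,
      fun h => hzx (Finset.mem_singleton.1 (h ▸ hz)), rfl⟩
  · rintro k ⟨S, hS, hne, hpr, rfl⟩
    by_cases hxS : x ∈ S
    · rw [← cut_compl E (A ∪ B) S]
      apply key
      · exact Finset.sdiff_subset
      · obtain ⟨z, hzU, hzS⟩ := Finset.exists_of_ssubset (hS.ssubset_of_ne hpr)
        exact ⟨z, Finset.mem_sdiff.2 ⟨hzU, hzS⟩⟩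
      · exact fun h => (Finset.mem_sdiff.1 h).2 hxS
    · exact key S hS hne hxS
end

section
/- For every hypergraph H = (V, E) and every positive integer k, there exists a subset E' ⊆ E that is a k-partition of H (E' contains every k-crisp edge of H) and is 2k-light, i.e., |E'| ≤ 2k·(κ(H − E') − κ(H)). -/
/- A hypergraph on a finite vertex type `V` is given by a multiset `E` of edges,
each edge a `Finset V` (with at least 2 vertices, stated as a hypothesis). -/

variable {V : Type*} [Fintype V] [DecidableEq V]

/-- An edge `e` of `H` is `k`-crisp if it crosses a cut of value less than `k`. -/
def IsKCrisp (E : Multiset (Finset V)) (k : ℕ) (e : Finset V) : Prop :=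
  e ∈ E ∧ ∃ A : Finset V, A.Nonempty ∧ A ≠ Finset.univ ∧
    (e ∩ A).Nonempty ∧ (e \ A).Nonempty ∧ Multiset.card (cutEdges E A) < k

section Aux

lemma toGraph_mono {E₁ E₂ : Multiset (Finset V)} (h : E₂ ≤ E₁) :
    toGraph E₂ ≤ toGraph E₁ := by
  rintro u v ⟨hne, e, he, hu, hv⟩
  exact ⟨hne, e, Multiset.mem_of_le h he, hu, hv⟩

noncomputable instance (E : Multiset (Finset V)) :
    Fintype (SimpleGraph.ConnectedComponent (toGraph E)) := Fintype.ofFinite _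

lemma surj_map {E₁ E₂ : Multiset (Finset V)} (h : E₂ ≤ E₁) :
    Function.Surjective
      (SimpleGraph.ConnectedComponent.map
        (SimpleGraph.Hom.ofLE (toGraph_mono h))) := by
  intro c
  obtain ⟨v, rfl⟩ := Quot.exists_rep c
  exact ⟨(toGraph E₂).connectedComponentMk v, rfl⟩

lemma kappa_mono {E₁ E₂ : Multiset (Finset V)} (h : E₂ ≤ E₁) :
    kappa E₁ ≤ kappa E₂ :=
  Nat.card_le_card_of_surjective _ (surj_map h)

lemma reach_mem {E₁ : Multiset (Finset V)} {A : Finset V}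
    (hE₁ : ∀ f ∈ E₁, ¬ ((f ∩ A).Nonempty ∧ (f \ A).Nonempty)) {u v : V}
    (h : (toGraph E₁).Reachable u v) : u ∈ A ↔ v ∈ A := by
  obtain ⟨w⟩ := h
  induction w with
  | nil => rfl
  | cons hadj p ih =>
    rename_i a b c
    obtain ⟨hne, f, hf, ha, hb⟩ := hadj
    have hab : a ∈ A ↔ b ∈ A := by
      constructor
      · intro haA
        by_contra hbA
        exact hE₁ f hf ⟨⟨a, Finset.mem_inter.2 ⟨ha, haA⟩⟩,
          ⟨b, Finset.mem_sdiff.2 ⟨hb, hbA⟩⟩⟩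
      · intro hbA
        by_contra haA
        exact hE₁ f hf ⟨⟨b, Finset.mem_inter.2 ⟨hb, hbA⟩⟩,
          ⟨a, Finset.mem_sdiff.2 ⟨ha, haA⟩⟩⟩
    exact hab.trans ih

lemma kappa_lt {E : Multiset (Finset V)} {A e : Finset V} (he : e ∈ E)
    (h1 : (e ∩ A).Nonempty) (h2 : (e \ A).Nonempty) :
    kappa E < kappa (E.filter (fun f => ¬ ((f ∩ A).Nonempty ∧ (f \ A).Nonempty))) := by
  set E₁ := E.filter (fun f => ¬ ((f ∩ A).Nonempty ∧ (f \ A).Nonempty)) with hE₁def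
  have hle : E₁ ≤ E := Multiset.filter_le _ _
  set f := SimpleGraph.ConnectedComponent.map
      (SimpleGraph.Hom.ofLE (toGraph_mono hle)) with hfdef
  have hsurj : Function.Surjective f := surj_map hle
  obtain ⟨u, hu⟩ := h1
  obtain ⟨v, hv⟩ := h2
  have huA : u ∈ A := (Finset.mem_inter.1 hu).2
  have hue : u ∈ e := (Finset.mem_inter.1 hu).1
  have hvA : v ∉ A := (Finset.mem_sdiff.1 hv).2
  have hve : v ∈ e := (Finset.mem_sdiff.1 hv).1
  have hne : u ≠ v := fun h => hvA (h ▸ huA)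
  have hninj : ¬ Function.Injective f := by
    intro hinj
    have heq : f ((toGraph E₁).connectedComponentMk u)
        = f ((toGraph E₁).connectedComponentMk v) := by
      show (toGraph E).connectedComponentMk u = (toGraph E).connectedComponentMk v
      exact SimpleGraph.ConnectedComponent.eq.2 ⟨SimpleGraph.Walk.cons
        (⟨hne, e, he, hue, hve⟩ : (toGraph E).Adj u v) SimpleGraph.Walk.nil⟩
    have := hinj heq
    have hreach : (toGraph E₁).Reachable u v :=
      SimpleGraph.ConnectedComponent.eq.1 this
    have := reach_mem (fun g hg => (Multiset.mem_filter.1 hg).2) hreach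
    exact hvA (this.1 huA)
  have hle' : kappa E ≤ kappa E₁ := kappa_mono hle
  rcases lt_or_eq_of_le hle' with h | h
  · exact h
  · exfalso
    apply hninj
    have : Function.Bijective f := by
      rw [Nat.bijective_iff_surjective_and_card]
      exact ⟨hsurj, h.symm⟩
    exact this.1

lemma main_lemma_s13 (n : ℕ) : ∀ E : Multiset (Finset V), Multiset.card E ≤ n →
    ∀ k : ℕ, 0 < k →
    ∃ E' : Multiset (Finset V), E' ≤ E ∧
      (∀ e : Finset V, IsKCrisp E k e → E.count e ≤ E'.count e) ∧
      Multiset.card E' ≤ 2 * k * (kappa (E - E') - kappa E) := by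
  induction n with
  | zero =>
    intro E hcard k hk
    refine ⟨0, Multiset.zero_le E, ?_, ?_⟩
    · intro e hcrisp
      have : E = 0 := Multiset.card_eq_zero.1 (Nat.le_zero.1 hcard)
      simp [this] at hcrisp
      exact absurd hcrisp.1 (by simp)
    · simp
  | succ n ih =>
    intro E hcard k hk
    by_cases hcrisp : ∃ e : Finset V, IsKCrisp E k e
    · obtain ⟨e, heE, A, hA1, hA2, h1, h2, hcut⟩ := hcrisp
      set p : Finset V → Prop := fun f => (f ∩ A).Nonempty ∧ (f \ A).Nonempty with hp
      set E₁ := E.filter (fun f => ¬ p f) with hE₁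
      have hsplit : E.filter p + E₁ = E := Multiset.filter_add_not p E
      have hcutE : cutEdges E A = E.filter p := rfl
      have hmemcut : e ∈ E.filter p := Multiset.mem_filter.2 ⟨heE, ⟨h1, h2⟩⟩
      have hc1 : 1 ≤ Multiset.card (E.filter p) :=
        Multiset.card_pos_iff_exists_mem.2 ⟨e, hmemcut⟩
      have hcard1 : Multiset.card E₁ ≤ n := by
        have := congrArg Multiset.card hsplit
        rw [Multiset.card_add] at this
        omega
      obtain ⟨E'', hle'', hcount'', hcard''⟩ := ih E₁ hcard1 k hk
      refine ⟨E.filter p + E'', ?_, ?_, ?_⟩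
      · calc E.filter p + E'' ≤ E.filter p + E₁ := add_le_add_right hle'' _
          _ = E := hsplit
      · intro f hf
        obtain ⟨hfE, B, hB1, hB2, hfB1, hfB2, hcutB⟩ := hf
        by_cases hpf : p f
        · have : E.count f = (E.filter p).count f := by
            rw [Multiset.count_filter, if_pos hpf]
          rw [Multiset.count_add]
          omega
        · have hcnt : E.count f = E₁.count f := by
            rw [hE₁, Multiset.count_filter, if_pos hpf]
          have hfE₁ : f ∈ E₁ := Multiset.mem_filter.2 ⟨hfE, hpf⟩
          have hcrisp₁ : IsKCrisp E₁ k f := by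
            refine ⟨hfE₁, B, hB1, hB2, hfB1, hfB2, ?_⟩
            calc Multiset.card (cutEdges E₁ B)
                ≤ Multiset.card (cutEdges E B) :=
                  Multiset.card_le_card (Multiset.filter_le_filter _
                    (Multiset.filter_le _ _))
              _ < k := hcutB
          have := hcount'' f hcrisp₁
          rw [Multiset.count_add]
          omega
      · have hsub : E - (E.filter p + E'') = E₁ - E'' := by
          rw [tsub_add_eq_tsub_tsub]
          congr 1
          exact Multiset.sub_filter_eq_filter_not p E
        rw [hsub, Multiset.card_add]
        have hkap1 : kappa E < kappa E₁ := kappa_lt heE h1 h2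
        have hkap2 : kappa E₁ ≤ kappa (E₁ - E'') := kappa_mono (tsub_le_self)
        have hc2 : Multiset.card (E.filter p) < k := by rw [← hcutE]; exact hcut
        set a := kappa (E₁ - E'')
        have h3 : a - kappa E₁ + 1 ≤ a - kappa E := by omega
        calc Multiset.card (E.filter p) + Multiset.card E''
            ≤ k + 2 * k * (a - kappa E₁) := by omega
          _ ≤ 2 * k * ((a - kappa E₁) + 1) := by nlinarith
          _ ≤ 2 * k * (a - kappa E) := Nat.mul_le_mul_left _ h3
    · refine ⟨0, Multiset.zero_le E, ?_, ?_⟩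
      · intro e he
        exact absurd ⟨e, he⟩ hcrisp
      · simp

end Aux

/-- every hypergraph has a `2k`-light `k`-partition: a subset `E' ⊆ E`
containing (all copies of) every `k`-crisp edge with
`|E'| ≤ 2k·(κ(H − E') − κ(H))`. -/
theorem light_partition_exists (E : Multiset (Finset V))
    (hE : ∀ e ∈ E, 2 ≤ e.card) (k : ℕ) (hk : 0 < k) :
    ∃ E' : Multiset (Finset V), E' ≤ E ∧
      (∀ e : Finset V, IsKCrisp E k e → E.count e ≤ E'.count e) ∧
      Multiset.card E' ≤ 2 * k * (kappa (E - E') - kappa E) :=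
  main_lemma_s13 (Multiset.card E) E le_rfl k hk
end

section
/- Let H = (V, E) be a connected hypergraph with |V| ≥ 2 and let A ⊊ V be a minimum cut, i.e., a nonempty proper subset with |δ_H(A)| = λ(H), where λ(H) = λ(H[V]). Then every edge e ∈ δ_H(A) satisfies γ_H(e) = λ(H). -/
/- A hypergraph on a finite vertex type `V` is given by a multiset `E` of edges,
each edge a `Finset V` (with at least 2 vertices, stated as a hypothesis). -/

variable {V : Type*} [Fintype V] [DecidableEq V]

/-- in a connected hypergraph with at least 2 vertices, every edge
crossing a minimum cut `A` has strength exactly `λ(H)` (where `λ(H) = λ(H[V])`). -/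
theorem strength_eq_mincut_on_mincut_edges (E : Multiset (Finset V))
    (hE : ∀ e ∈ E, 2 ≤ e.card) (hconn : (toGraph E).Connected)
    (hn : 2 ≤ Fintype.card V) (A : Finset V) (hA : A.Nonempty)
    (hAne : A ≠ Finset.univ)
    (hmin : Multiset.card (cutEdges E A) = lam E Finset.univ) :
    ∀ e ∈ cutEdges E A, strength E e = lam E Finset.univ := by
  intro e he
  rw [cutEdges, Multiset.mem_filter] at he
  obtain ⟨heE, heA, heA'⟩ := he
  apply le_antisymm
  · apply Finset.sup_le
    intro U hU
    rw [Finset.mem_filter] at hU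
    obtain ⟨-, heU⟩ := hU
    rw [← hmin]
    have h1 : lam E U ≤ Multiset.card (cutEdges (induced E U) (A ∩ U)) := by
      apply Nat.sInf_le
      refine ⟨A ∩ U, Finset.inter_subset_right, ?_, ?_, rfl⟩
      · obtain ⟨x, hx⟩ := heA
        rw [Finset.mem_inter] at hx
        exact ⟨x, Finset.mem_inter.2 ⟨hx.2, heU hx.1⟩⟩
      · intro hcon
        obtain ⟨y, hy⟩ := heA'
        rw [Finset.mem_sdiff] at hy
        have hyU : y ∈ A ∩ U := by rw [hcon]; exact heU hy.1
        exact hy.2 (Finset.mem_inter.1 hyU).1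
    refine h1.trans (Multiset.card_le_card ?_)
    rw [cutEdges, induced, Multiset.filter_filter, cutEdges]
    apply Multiset.monotone_filter_right
    rintro f ⟨⟨⟨x, hx⟩, ⟨y, hy⟩⟩, hfU⟩
    constructor
    · rw [Finset.mem_inter, Finset.mem_inter] at hx
      exact ⟨x, Finset.mem_inter.2 ⟨hx.1, hx.2.1⟩⟩
    · rw [Finset.mem_sdiff, Finset.mem_inter, not_and] at hy
      exact ⟨y, Finset.mem_sdiff.2 ⟨hy.1, fun h => hy.2 h (hfU hy.1)⟩⟩
  · apply Finset.le_sup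
    rw [Finset.mem_filter]
    exact ⟨Finset.mem_powerset.2 (Finset.subset_univ _), Finset.subset_univ _⟩
end
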